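/- Assume the V structure with P(X=x, C=c) > 0 for all x, c ∈ {0,1}. Define the stratum-specific risk differences RD(c) := P(Y=1 | X=1, C=c) − P(Y=1 | X=0, C=c), and the weights w_c := var(X | C=c)·P(C=c) / [ var(X | C=1)·P(C=1) + var(X | C=0)·P(C=0) ] for c ∈ {0,1}. Then the linear-regression-adjusted risk difference w_1·RD(1) + w_0·RD(0) equals − [ P(X=1)·( p_{C=1|11} − p_{C=1|10} ) + P(X=0)·( p_{C=1|01} − p_{C=1|00} ) ] · [ P(Y=1)·( p_{C=1|11} − p_{C=1|01} ) + P(Y=0)·( p_{C=1|10} − p_{C=1|00} ) ] · P(Y=1)·P(Y=0) / [ P(X=1)·( p_{C=1|11}·P(Y=1) + p_{C=1|10}·P(Y=0) )·( p_{C=0|11}·P(Y=1) + p_{C=0|10}·P(Y=0) ) + P(X=0)·( p_{C=1|01}·P(Y=1) + p_{C=1|00}·P(Y=0) )·( p_{C=0|01}·P(Y=1) + p_{C=0|00}·P(Y=0) ) ]. -/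

import Mathlib

open MeasureTheory ProbabilityTheory

variable {Ω : Type*} [MeasurableSpace Ω]

/-- The event that the random variable `X` takes the value `x`. -/
def ev (X : Ω → ℝ) (x : ℝ) : Set Ω := {ω | X ω = x}

/-- The probability of an event, as a real number. -/
noncomputable def pr (P : Measure Ω) (s : Set Ω) : ℝ := (P s).toReal

/-- The conditional probability `P(s | t)`, as a real number. -/
noncomputable def cpr (P : Measure Ω) (s t : Set Ω) : ℝ := pr (P[|t]) s

/-- The covariance of two real-valued random variables. -/
noncomputable def rcov (P : Measure Ω) (X Y : Ω → ℝ) : ℝ :=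
  ∫ ω, (X ω - ∫ ω', X ω' ∂P) * (Y ω - ∫ ω', Y ω' ∂P) ∂P

/-- The conditional covariance of two real-valued random variables given an event. -/
noncomputable def covCond (P : Measure Ω) (X Y : Ω → ℝ) (t : Set Ω) : ℝ :=
  rcov (P[|t]) X Y

/-- The conditional variance of a real-valued random variable given an event. -/
noncomputable def varCond (P : Measure Ω) (X : Ω → ℝ) (t : Set Ω) : ℝ :=
  covCond P X X t

/-- A measurable `{0,1}`-valued random variable. -/
def IsBin (X : Ω → ℝ) : Prop := Measurable X ∧ ∀ ω, X ω = 0 ∨ X ω = 1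

/-- The stratum-specific risk difference of `Y` comparing `X = 1` with `X = 0` within the
stratum `Z = z`. -/
noncomputable def strataRD (P : Measure Ω) (X Y Z : Ω → ℝ) (z : ℝ) : ℝ :=
  cpr P (ev Y 1) (ev X 1 ∩ ev Z z) - cpr P (ev Y 1) (ev X 0 ∩ ev Z z)

/-- The linear-regression weight of the stratum `Z = z`, proportional to
`var(X | Z = z) * P(Z = z)`. -/
noncomputable def strataW (P : Measure Ω) (X Z : Ω → ℝ) (z : ℝ) : ℝ :=
  varCond P X (ev Z z) * pr P (ev Z z) /
    (varCond P X (ev Z 1) * pr P (ev Z 1) + varCond P X (ev Z 0) * pr P (ev Z 0))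

section helpers
lemma ev_preimage (X : Ω → ℝ) (x : ℝ) : ev X x = X ⁻¹' {x} := rfl

lemma IsBin.mev {X : Ω → ℝ} (hX : IsBin X) (x : ℝ) : MeasurableSet (ev X x) :=
  hX.1 (measurableSet_singleton x)

lemma IsBin.ev_zero {X : Ω → ℝ} (hX : IsBin X) : ev X 0 = (ev X 1)ᶜ := by
  ext ω
  simp only [ev, Set.mem_setOf_eq, Set.mem_compl_iff]
  rcases hX.2 ω with h | h <;> simp [h]

lemma pr_mono (P : Measure Ω) [IsProbabilityMeasure P] {s t : Set Ω} (h : s ⊆ t) :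
    pr P s ≤ pr P t := ENNReal.toReal_mono (measure_ne_top _ _) (measure_mono h)

lemma pr_compl (P : Measure Ω) [IsProbabilityMeasure P] {s : Set Ω} (hs : MeasurableSet s) :
    pr P sᶜ = 1 - pr P s := by
  rw [pr, measure_compl hs (measure_ne_top _ _), measure_univ, pr,
    ENNReal.toReal_sub_of_le prob_le_one ENNReal.one_ne_top, ENNReal.toReal_one]

lemma pr_split (P : Measure Ω) [IsProbabilityMeasure P] {t : Set Ω} (ht : MeasurableSet t)
    (s : Set Ω) : pr P s = pr P (s ∩ t) + pr P (s ∩ tᶜ) := by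
  rw [pr, pr, pr, ← ENNReal.toReal_add (measure_ne_top _ _) (measure_ne_top _ _),
    ← Set.diff_eq, measure_inter_add_diff s ht]

lemma cpr_eq (P : Measure Ω) {t : Set Ω} (ht : MeasurableSet t) (s : Set Ω) :
    cpr P s t = pr P (t ∩ s) / pr P t := by
  rw [cpr, pr, cond_apply ht, ENNReal.toReal_mul, ENNReal.toReal_inv, pr, pr]
  ring

lemma ne_zero_of_pr_pos {P : Measure Ω} {t : Set Ω} (h : 0 < pr P t) : P t ≠ 0 := by
  intro h0; rw [pr, h0] at h; simp at h

lemma integral_isBin (Q : Measure Ω) {X : Ω → ℝ} (hX : IsBin X) :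
    ∫ ω, X ω ∂Q = pr Q (ev X 1) := by
  have hind : X = (ev X 1).indicator (fun _ => (1:ℝ)) := by
    funext ω
    rcases hX.2 ω with h | h
    · have : ω ∉ ev X 1 := by simp [ev, h]
      simp [Set.indicator_of_notMem this, h]
    · have : ω ∈ ev X 1 := h
      simp [Set.indicator_of_mem this, h]
  rw [pr, ← measureReal_def, ← integral_indicator_one (hX.mev 1)]
  exact congrArg (fun f => ∫ ω, f ω ∂Q) hind

lemma integrable_isBin (Q : Measure Ω) [IsFiniteMeasure Q] {X : Ω → ℝ} (hX : IsBin X) :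
    Integrable X Q := by
  have hind : X = (ev X 1).indicator (fun _ => (1:ℝ)) := by
    funext ω
    rcases hX.2 ω with h | h
    · have : ω ∉ ev X 1 := by simp [ev, h]
      simp [Set.indicator_of_notMem this, h]
    · have : ω ∈ ev X 1 := h
      simp [Set.indicator_of_mem this, h]
  rw [hind]
  exact (integrable_const 1).indicator (hX.mev 1)

lemma rcov_isBin (Q : Measure Ω) [IsProbabilityMeasure Q] {X : Ω → ℝ} (hX : IsBin X) :
    rcov Q X X = pr Q (ev X 1) - pr Q (ev X 1) ^ 2 := by
  set m := pr Q (ev X 1) with hm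
  have hint : Integrable X Q := integrable_isBin Q hX
  have hfun : (fun ω => (X ω - ∫ ω', X ω' ∂Q) * (X ω - ∫ ω', X ω' ∂Q))
      = fun ω => (1 - 2 * m) * X ω + m ^ 2 := by
    rw [integral_isBin Q hX, ← hm]
    funext ω
    rcases hX.2 ω with h | h <;> rw [h] <;> ring
  rw [rcov, hfun, integral_add (hint.const_mul _) (integrable_const _),
    integral_const_mul, integral_isBin Q hX, ← hm, integral_const]
  simp
  ring
end helpers

set_option maxHeartbeats 4000000 in
/-- V-bias due to linear regression adjustment for `C`. -/
theorem V_bias_lm (P : Measure Ω) [IsProbabilityMeasure P]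
    (X Y C : Ω → ℝ) (hX : IsBin X) (hY : IsBin Y) (hC : IsBin C)
    (hindep : IndepFun X Y P)
    (hX1 : 0 < pr P (ev X 1)) (hX1' : pr P (ev X 1) < 1)
    (hY1 : 0 < pr P (ev Y 1)) (hY1' : pr P (ev Y 1) < 1)
    (hXC : ∀ x c : ℝ, (x = 0 ∨ x = 1) → (c = 0 ∨ c = 1) → 0 < pr P (ev X x ∩ ev C c)) :
    strataW P X C 1 * strataRD P X Y C 1 + strataW P X C 0 * strataRD P X Y C 0 =
      -((pr P (ev X 1) *
            (cpr P (ev C 1) (ev X 1 ∩ ev Y 1) - cpr P (ev C 1) (ev X 1 ∩ ev Y 0)) +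
          pr P (ev X 0) *
            (cpr P (ev C 1) (ev X 0 ∩ ev Y 1) - cpr P (ev C 1) (ev X 0 ∩ ev Y 0))) *
        (pr P (ev Y 1) *
            (cpr P (ev C 1) (ev X 1 ∩ ev Y 1) - cpr P (ev C 1) (ev X 0 ∩ ev Y 1)) +
          pr P (ev Y 0) *
            (cpr P (ev C 1) (ev X 1 ∩ ev Y 0) - cpr P (ev C 1) (ev X 0 ∩ ev Y 0))) *
        pr P (ev Y 1) * pr P (ev Y 0) /
        (pr P (ev X 1) *
            (cpr P (ev C 1) (ev X 1 ∩ ev Y 1) * pr P (ev Y 1) +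
              cpr P (ev C 1) (ev X 1 ∩ ev Y 0) * pr P (ev Y 0)) *
            (cpr P (ev C 0) (ev X 1 ∩ ev Y 1) * pr P (ev Y 1) +
              cpr P (ev C 0) (ev X 1 ∩ ev Y 0) * pr P (ev Y 0)) +
          pr P (ev X 0) *
            (cpr P (ev C 1) (ev X 0 ∩ ev Y 1) * pr P (ev Y 1) +
              cpr P (ev C 1) (ev X 0 ∩ ev Y 0) * pr P (ev Y 0)) *
            (cpr P (ev C 0) (ev X 0 ∩ ev Y 1) * pr P (ev Y 1) +
              cpr P (ev C 0) (ev X 0 ∩ ev Y 0) * pr P (ev Y 0)))) := by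
  -- probabilities of X=0, Y=0 as complements
  have hp0 : pr P (ev X 0) = 1 - pr P (ev X 1) := by rw [hX.ev_zero, pr_compl P (hX.mev 1)]
  have hq0 : pr P (ev Y 0) = 1 - pr P (ev Y 1) := by rw [hY.ev_zero, pr_compl P (hY.mev 1)]
  -- independence
  have hXY : ∀ x y : ℝ, pr P (ev X x ∩ ev Y y) = pr P (ev X x) * pr P (ev Y y) := by
    intro x y
    rw [ev_preimage X x, ev_preimage Y y, pr,
      hindep.measure_inter_preimage_eq_mul _ _ (measurableSet_singleton x)
        (measurableSet_singleton y), ENNReal.toReal_mul]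
    rfl
  -- positivity of pr (ev X x ∩ ev Y y)
  have hXYpos : ∀ x y : ℝ, (x = 0 ∨ x = 1) → (y = 0 ∨ y = 1) →
      0 < pr P (ev X x ∩ ev Y y) := by
    intro x y hx hy
    rw [hXY x y]
    rcases hx with hx | hx <;> rcases hy with hy | hy <;> subst hx <;> subst hy <;>
      apply mul_pos <;> linarith
  -- triple atoms with C = 1
  have hA : ∀ x y : ℝ, (x = 0 ∨ x = 1) → (y = 0 ∨ y = 1) →
      pr P (ev X x ∩ ev Y y ∩ ev C 1)
        = cpr P (ev C 1) (ev X x ∩ ev Y y) * pr P (ev X x ∩ ev Y y) := by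
    intro x y hx hy
    rw [cpr_eq P ((hX.mev x).inter (hY.mev y)) (ev C 1),
      div_mul_cancel₀ _ (ne_of_gt (hXYpos x y hx hy))]
  -- triple atoms with C = 0
  have hB : ∀ x y : ℝ, pr P (ev X x ∩ ev Y y ∩ ev C 0)
      = pr P (ev X x ∩ ev Y y) - pr P (ev X x ∩ ev Y y ∩ ev C 1) := by
    intro x y
    have h := pr_split P (hC.mev 1) (ev X x ∩ ev Y y)
    rw [← hC.ev_zero] at h
    linarith
  -- cpr of C = 0 given X,Y
  have hg0 : ∀ x y : ℝ, (x = 0 ∨ x = 1) → (y = 0 ∨ y = 1) →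
      cpr P (ev C 0) (ev X x ∩ ev Y y) = 1 - cpr P (ev C 1) (ev X x ∩ ev Y y) := by
    intro x y hx hy
    have hpos := hXYpos x y hx hy
    rw [cpr_eq P ((hX.mev x).inter (hY.mev y)), cpr_eq P ((hX.mev x).inter (hY.mev y)),
      hB x y]
    field_simp
  -- splitting over Y
  have hPXC : ∀ x c : ℝ, pr P (ev X x ∩ ev C c)
      = pr P (ev X x ∩ ev Y 1 ∩ ev C c) + pr P (ev X x ∩ ev Y 0 ∩ ev C c) := by
    intro x c
    have h := pr_split P (hY.mev 1) (ev X x ∩ ev C c)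
    rw [← hY.ev_zero] at h
    rw [h]
    congr 1 <;> · congr 1; ext ω; simp only [ev, Set.mem_inter_iff, Set.mem_setOf_eq]; tauto
  -- splitting over X
  have hPC : ∀ c : ℝ, pr P (ev C c) = pr P (ev X 1 ∩ ev C c) + pr P (ev X 0 ∩ ev C c) := by
    intro c
    have h := pr_split P (hX.mev 1) (ev C c)
    rw [← hX.ev_zero] at h
    rw [h]
    congr 1 <;> · congr 1; ext ω; simp only [ev, Set.mem_inter_iff, Set.mem_setOf_eq]; tauto
  -- positivity of pr (ev C c)
  have hPCpos : ∀ c : ℝ, (c = 0 ∨ c = 1) → 0 < pr P (ev C c) := by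
    intro c hc
    calc 0 < pr P (ev X 1 ∩ ev C c) := hXC 1 c (Or.inr rfl) hc
    _ ≤ pr P (ev C c) := pr_mono P Set.inter_subset_right
  -- conditional mean of X given C
  have hm : ∀ c : ℝ, cpr P (ev X 1) (ev C c) = pr P (ev X 1 ∩ ev C c) / pr P (ev C c) := by
    intro c
    rw [cpr_eq P (hC.mev c), Set.inter_comm]
  -- conditional variance
  have hvar : ∀ c : ℝ, (c = 0 ∨ c = 1) → varCond P X (ev C c)
      = cpr P (ev X 1) (ev C c) - cpr P (ev X 1) (ev C c) ^ 2 := by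
    intro c hc
    haveI : IsProbabilityMeasure (P[|ev C c]) :=
      cond_isProbabilityMeasure (ne_zero_of_pr_pos (hPCpos c hc))
    exact rcov_isBin _ hX
  -- strata risk pieces
  have hRD : ∀ x c : ℝ, cpr P (ev Y 1) (ev X x ∩ ev C c)
      = pr P (ev X x ∩ ev Y 1 ∩ ev C c) / pr P (ev X x ∩ ev C c) := by
    intro x c
    rw [cpr_eq P ((hX.mev x).inter (hC.mev c))]
    congr 2
    ext ω; simp only [ev, Set.mem_inter_iff, Set.mem_setOf_eq]; tauto
  have o1 : (1:ℝ) = 0 ∨ (1:ℝ) = 1 := Or.inr rfl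
  have o0 : (0:ℝ) = 0 ∨ (0:ℝ) = 1 := Or.inl rfl
  -- weighted variance piece as a single fraction
  have hV : ∀ c : ℝ, (c = 0 ∨ c = 1) → varCond P X (ev C c) * pr P (ev C c)
      = pr P (ev X 1 ∩ ev C c) * pr P (ev X 0 ∩ ev C c) / pr P (ev C c) := by
    intro c hc
    have h1 := hXC 1 c o1 hc
    have h0 := hXC 0 c o0 hc
    rw [hvar c hc, hm c, hPC c]
    field_simp
    ring
  -- weighted risk-difference piece as a single fraction
  have hS : ∀ c : ℝ, (c = 0 ∨ c = 1) → varCond P X (ev C c) * pr P (ev C c) *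
        (cpr P (ev Y 1) (ev X 1 ∩ ev C c) - cpr P (ev Y 1) (ev X 0 ∩ ev C c))
      = (pr P (ev X 1 ∩ ev Y 1 ∩ ev C c) * pr P (ev X 0 ∩ ev C c)
          - pr P (ev X 0 ∩ ev Y 1 ∩ ev C c) * pr P (ev X 1 ∩ ev C c)) / pr P (ev C c) := by
    intro c hc
    have h1 := hXC 1 c o1 hc
    have h0 := hXC 0 c o0 hc
    rw [hvar c hc, hm c, hRD 1 c, hRD 0 c, hPC c]
    field_simp
    ring
  have hPC1 : pr P (ev C 1) ≠ 0 := (hPCpos 1 o1).ne'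
  have hPC0 : pr P (ev C 0) ≠ 0 := (hPCpos 0 o0).ne'
  -- unfold and restructure the left-hand side into a single fraction
  simp only [strataW, strataRD]
  rw [div_mul_eq_mul_div, div_mul_eq_mul_div, ← add_div,
    hS 1 o1, hS 0 o0, hV 1 o1, hV 0 o0,
    div_add_div _ _ hPC1 hPC0, div_add_div _ _ hPC1 hPC0,
    div_div_div_comm, div_self (mul_ne_zero hPC1 hPC0), div_one]
  -- rewrite everything into atomic form
  rw [hg0 1 1 o1 o1, hg0 1 0 o1 o0, hg0 0 1 o0 o1, hg0 0 0 o0 o0,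
    hPC 1, hPC 0,
    hPXC 1 1, hPXC 0 1, hPXC 1 0, hPXC 0 0,
    hB 1 1, hB 1 0, hB 0 1, hB 0 0,
    hA 1 1 o1 o1, hA 1 0 o1 o0, hA 0 1 o0 o1, hA 0 0 o0 o0,
    hXY 1 1, hXY 1 0, hXY 0 1, hXY 0 0, hp0, hq0]
  have hk : pr P (ev X 1) * (1 - pr P (ev X 1)) ≠ 0 :=
    (mul_pos hX1 (by linarith)).ne'
  rw [← neg_div]
  conv_rhs => rw [← mul_div_mul_left _ _ hk]
  congr 1 <;> ring
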